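/- Let n ≥ 2, H = {w ∈ ℂ^n : 2 Re w_n < 1}, 0* = (0,…,0,1), g(w) = |w|^{−2n+2} − |w − 0*|^{−2n+2} for w ∈ H ∖ {0}, and define g_0(w) = g(w) + (1/(n−1)) Σ_{i=1}^n w_i ∂g/∂w_i (w). Then g_0 extends to the function w ↦ |w − 0*|^{−2n} (−|0*|² + Σ_{i=1}^n 0*_i w̄_i) on all of H; in particular the singularity of g at 0 cancels and g_0 is real-analytic (indeed harmonic) on H. -/

import Mathlib

open scoped ComplexConjugate

/-- The Wirtinger derivative `∂f/∂w_j = (1/2)(∂f/∂x_j - i ∂f/∂y_j)`. -/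
noncomputable def wirt {n : ℕ} (j : Fin n) (f : EuclideanSpace ℂ (Fin n) → ℂ)
    (p : EuclideanSpace ℂ (Fin n)) : ℂ :=
  (1 / 2) * (fderiv ℝ f p (EuclideanSpace.single j 1)
    - Complex.I * fderiv ℝ f p (EuclideanSpace.single j Complex.I))

noncomputable abbrev Esp (n : ℕ) := EuclideanSpace ℂ (Fin n)

/-- derivative of `x ↦ ∑ i, (x i - a i) * conj (x i - a i)` -/
noncomputable def dsq {n : ℕ} (c : Fin n → ℂ) : Esp n →L[ℝ] ℂ :=
  ∑ i, ((c i) • (Complex.conjCLE.toContinuousLinearMap.comp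
        ((EuclideanSpace.proj i : Esp n →L[ℂ] ℂ).restrictScalars ℝ))
      + (conj (c i)) • ((EuclideanSpace.proj i : Esp n →L[ℂ] ℂ).restrictScalars ℝ))

lemma hasFDerivAt_sumsq {n : ℕ} (a w : Esp n) :
    HasFDerivAt (fun x : Esp n => ∑ i, (x i - a i) * conj (x i - a i))
      (dsq (fun i => w i - a i)) w := by
  apply HasFDerivAt.fun_sum
  intro i _
  have h1 : HasFDerivAt (fun x : Esp n => x i - a i)
      ((EuclideanSpace.proj i : Esp n →L[ℂ] ℂ).restrictScalars ℝ) w :=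
    (((EuclideanSpace.proj i : Esp n →L[ℂ] ℂ).restrictScalars ℝ).hasFDerivAt).sub_const (a i)
  have h2 : HasFDerivAt (fun x : Esp n => conj (x i - a i))
      (Complex.conjCLE.toContinuousLinearMap.comp
        ((EuclideanSpace.proj i : Esp n →L[ℂ] ℂ).restrictScalars ℝ)) w :=
    (Complex.conjCLE.toContinuousLinearMap.hasFDerivAt).comp w h1
  exact h1.mul h2

lemma sum_mul_conj {n : ℕ} (y : Esp n) :
    ∑ i, y i * conj (y i) = ((‖y‖ ^ 2 : ℝ) : ℂ) := by
  have h : ‖y‖ ^ 2 = ∑ i, Complex.normSq (y i) := by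
    rw [EuclideanSpace.norm_eq, Real.sq_sqrt (by positivity)]
    simp [Complex.sq_norm]
  rw [h]
  push_cast
  simp [Complex.mul_conj]

lemma hasFDerivAt_main {n : ℕ} (a w : Esp n) (k : ℤ) (h : w ≠ a) :
    HasFDerivAt (fun x : Esp n => ((‖x - a‖ ^ 2 : ℝ) : ℂ) ^ k)
      ((ContinuousLinearMap.smulRight (1 : ℂ →L[ℂ] ℂ)
          ((k : ℂ) * ((‖w - a‖ ^ 2 : ℝ) : ℂ) ^ (k - 1))).restrictScalars ℝ
        |>.comp (dsq (fun i => w i - a i))) w := by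
  have hs : w - a ≠ 0 := sub_ne_zero.mpr h
  have hpos : (0:ℝ) < ‖w - a‖ := norm_pos_iff.mpr hs
  have hne : ((‖w - a‖ ^ 2 : ℝ) : ℂ) ≠ 0 := by
    exact_mod_cast Complex.ofReal_ne_zero.mpr (by positivity)
  have hz : HasFDerivAt (fun z : ℂ => z ^ k)
      (ContinuousLinearMap.smulRight (1 : ℂ →L[ℂ] ℂ)
        ((k : ℂ) * ((‖w - a‖ ^ 2 : ℝ) : ℂ) ^ (k - 1))) (((‖w - a‖ ^ 2 : ℝ) : ℂ)) :=
    (hasDerivAt_zpow k _ (Or.inl hne)).hasFDerivAt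
  have hu : HasFDerivAt (fun x : Esp n => ∑ i, (x i - a i) * conj (x i - a i))
      (dsq (fun i => w i - a i)) w := hasFDerivAt_sumsq a w
  have hfun : (fun x : Esp n => ∑ i, (x i - a i) * conj (x i - a i))
      = fun x : Esp n => ((‖x - a‖ ^ 2 : ℝ) : ℂ) := by
    funext x
    rw [← sum_mul_conj (x - a)]
    rfl
  rw [hfun] at hu
  have := (hz.restrictScalars ℝ).comp w hu
  exact this

lemma dsq_apply {n : ℕ} (c : Fin n → ℂ) (v : Esp n) :
    dsq c v = ∑ i, (c i * conj (v i) + conj (c i) * v i) := by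
  simp only [dsq, ContinuousLinearMap.sum_apply, ContinuousLinearMap.add_apply,
    ContinuousLinearMap.smul_apply, ContinuousLinearMap.comp_apply,
    ContinuousLinearMap.coe_restrictScalars', ContinuousLinearEquiv.coe_coe, smul_eq_mul]
  rfl

lemma dsq_single_one {n : ℕ} (c : Fin n → ℂ) (j : Fin n) :
    dsq c (EuclideanSpace.single j (1 : ℂ)) = c j + conj (c j) := by
  rw [dsq_apply, Finset.sum_eq_single j]
  · simp
  · intro b _ hb; simp [EuclideanSpace.single_apply, hb]
  · simp

lemma dsq_single_I {n : ℕ} (c : Fin n → ℂ) (j : Fin n) :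
    dsq c (EuclideanSpace.single j Complex.I) = - c j * Complex.I + conj (c j) * Complex.I := by
  rw [dsq_apply, Finset.sum_eq_single j]
  · simp [Complex.conj_I]
  · intro b _ hb; simp [EuclideanSpace.single_apply, hb]
  · simp

lemma wirt_formula {n : ℕ} (a w : Esp n) (k : ℤ) (h : w ≠ a) (j : Fin n) :
    wirt j (fun x => ((‖x - a‖ ^ 2 : ℝ) : ℂ) ^ k) w
      = (k : ℂ) * ((‖w - a‖ ^ 2 : ℝ) : ℂ) ^ (k - 1) * conj (w j - a j) := by
  have hd := hasFDerivAt_main a w k h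
  rw [wirt, hd.fderiv]
  simp only [ContinuousLinearMap.comp_apply, ContinuousLinearMap.coe_restrictScalars',
    ContinuousLinearMap.smulRight_apply, ContinuousLinearMap.one_apply,
    dsq_single_one, dsq_single_I]
  simp only [smul_eq_mul]
  ring_nf
  rw [Complex.I_sq]
  ring


lemma wirt_sub {n : ℕ} (j : Fin n) (f1 f2 : Esp n → ℂ) (p : Esp n)
    (h1 : DifferentiableAt ℝ f1 p) (h2 : DifferentiableAt ℝ f2 p) :
    wirt j (fun x => f1 x - f2 x) p = wirt j f1 p - wirt j f2 p := by
  simp only [wirt, fderiv_fun_sub h1 h2, ContinuousLinearMap.sub_apply]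
  ring

/-- For the Green function `g(w) = |w|^{-2n+2} - |w-0*|^{-2n+2}` of the
half-space `H = {2 Re w_n < 1}` with pole at `0`, the combination
`g₀(w) = g(w) + (1/(n-1)) Σ_i w_i ∂g/∂w_i` has no singularity at `0`:
on `H \ {0}` it coincides with `w ↦ |w - 0*|^{-2n} (-|0*|² + Σ_i 0*_i w̄_i)
= |w - 0*|^{-2n} (w̄_n - 1)`, which is (real-analytic, indeed harmonic) on
all of `H`. -/
theorem stmt_13 (n : ℕ) (hn : 2 ≤ n) :
    letI en : Fin n := ⟨n - 1, by omega⟩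
    letI estar : EuclideanSpace ℂ (Fin n) := EuclideanSpace.single en (1 : ℂ)
    letI g : EuclideanSpace ℂ (Fin n) → ℂ :=
      fun w => ((‖w‖ : ℝ) : ℂ) ^ (-(2 * (n : ℤ)) + 2)
        - ((‖w - estar‖ : ℝ) : ℂ) ^ (-(2 * (n : ℤ)) + 2)
    ∀ w : EuclideanSpace ℂ (Fin n), 2 * (w en).re < 1 → w ≠ 0 →
      g w + (1 / ((n : ℂ) - 1)) * ∑ i, w i * wirt i g w
        = ((‖w - estar‖ : ℝ) : ℂ) ^ (-(2 * (n : ℤ))) * (conj (w en) - 1) := by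
  intro w hw hw0
  set en : Fin n := ⟨n - 1, by omega⟩ with hen
  set estar : EuclideanSpace ℂ (Fin n) := EuclideanSpace.single en (1 : ℂ) with hestar
  set k : ℤ := 1 - (n : ℤ) with hk
  have hcast : ∀ (r : ℝ) (m : ℤ), ((r : ℝ) : ℂ) ^ (2 * m) = ((r ^ 2 : ℝ) : ℂ) ^ m := by
    intro r m; rw [zpow_mul]; norm_cast
  have hke : (-(2 * (n : ℤ)) + 2) = 2 * k := by rw [hk]; ring
  have hkn : (-(2 * (n : ℤ))) = 2 * (k - 1) := by rw [hk]; ring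
  have hgeq : (fun x : Esp n => ((‖x‖ : ℝ) : ℂ) ^ (-(2 * (n : ℤ)) + 2)
        - ((‖x - estar‖ : ℝ) : ℂ) ^ (-(2 * (n : ℤ)) + 2))
      = fun x : Esp n => ((‖x‖ ^ 2 : ℝ) : ℂ) ^ k
        - ((‖x - estar‖ ^ 2 : ℝ) : ℂ) ^ k := by
    funext x
    rw [hke, hcast, hcast]
  rw [hgeq, hkn, hcast]
  have hwe : w ≠ estar := by
    intro he
    rw [he, hestar] at hw
    simp [EuclideanSpace.single_apply] at hw
  have hw0' : w ≠ (0 : Esp n) := hw0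
  have hW : ∀ j, wirt j (fun x : Esp n => ((‖x‖ ^ 2 : ℝ) : ℂ) ^ k
        - ((‖x - estar‖ ^ 2 : ℝ) : ℂ) ^ k) w
      = (k : ℂ) * ((‖w‖ ^ 2 : ℝ) : ℂ) ^ (k - 1) * conj (w j)
        - (k : ℂ) * ((‖w - estar‖ ^ 2 : ℝ) : ℂ) ^ (k - 1) * conj (w j - estar j) := by
    intro j
    have hfe : (fun x : Esp n => ((‖x‖ ^ 2 : ℝ) : ℂ) ^ k - ((‖x - estar‖ ^ 2 : ℝ) : ℂ) ^ k)
        = fun x : Esp n => ((‖x - (0 : Esp n)‖ ^ 2 : ℝ) : ℂ) ^ k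
          - ((‖x - estar‖ ^ 2 : ℝ) : ℂ) ^ k := by
      funext x; rw [sub_zero]
    have h1 := hasFDerivAt_main (0 : Esp n) w k hw0'
    have h2 := hasFDerivAt_main estar w k hwe
    rw [hfe, wirt_sub j _ _ w h1.differentiableAt h2.differentiableAt,
      wirt_formula _ _ _ hw0', wirt_formula _ _ _ hwe]
    simp
  simp only [hW]
  set A : ℂ := ((‖w‖ ^ 2 : ℝ) : ℂ) with hA
  set B : ℂ := ((‖w - estar‖ ^ 2 : ℝ) : ℂ) with hB
  have h1 : ∑ i, w i * conj (w i) = A := sum_mul_conj w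
  have h2 : ∑ i, w i * conj (estar i) = w en := by
    rw [hestar, Finset.sum_eq_single en]
    · simp
    · intro b _ hb; simp [EuclideanSpace.single_apply, hb]
    · simp
  have h3 : ∑ i, estar i * conj (w i) = conj (w en) := by
    rw [hestar, Finset.sum_eq_single en]
    · simp
    · intro b _ hb; simp [EuclideanSpace.single_apply, hb]
    · simp
  have h4 : ∑ i, estar i * conj (estar i) = 1 := by
    rw [hestar, Finset.sum_eq_single en]
    · simp
    · intro b _ hb; simp [EuclideanSpace.single_apply, hb]
    · simp
  have hsum : ∑ i, w i * ((k : ℂ) * A ^ (k - 1) * conj (w i)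
        - (k : ℂ) * B ^ (k - 1) * conj (w i - estar i))
      = (k : ℂ) * A ^ (k - 1) * A - (k : ℂ) * B ^ (k - 1) * (A - w en) := by
    calc ∑ i, w i * ((k : ℂ) * A ^ (k - 1) * conj (w i)
          - (k : ℂ) * B ^ (k - 1) * conj (w i - estar i))
        = ∑ i, ((k : ℂ) * A ^ (k - 1) * (w i * conj (w i))
          - (k : ℂ) * B ^ (k - 1) * (w i * conj (w i))
          + (k : ℂ) * B ^ (k - 1) * (w i * conj (estar i))) := by
          apply Finset.sum_congr rfl; intro i _; rw [map_sub]; ring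
      _ = _ := by
          rw [Finset.sum_add_distrib, Finset.sum_sub_distrib, ← Finset.mul_sum,
            ← Finset.mul_sum, ← Finset.mul_sum, h1, h2]
          ring
  rw [hsum]
  have hBrel : B = A - w en - conj (w en) + 1 := by
    rw [hB, hA, ← sum_mul_conj w, ← sum_mul_conj (w - estar)]
    calc ∑ i, (w - estar) i * conj ((w - estar) i)
        = ∑ i, (w i * conj (w i) - w i * conj (estar i) - estar i * conj (w i)
            + estar i * conj (estar i)) := by
          apply Finset.sum_congr rfl; intro i _
          show (w i - estar i) * conj (w i - estar i) = _
          rw [map_sub]; ring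
      _ = _ := by
          rw [Finset.sum_add_distrib, Finset.sum_sub_distrib, Finset.sum_sub_distrib,
            h2, h3, h4]
  have hAne : A ≠ 0 := by
    rw [hA]
    exact_mod_cast pow_ne_zero 2 (norm_ne_zero_iff.mpr hw0')
  have hBne : B ≠ 0 := by
    rw [hB]
    exact_mod_cast pow_ne_zero 2 (norm_ne_zero_iff.mpr (sub_ne_zero.mpr hwe))
  have hAz : A ^ k = A ^ (k - 1) * A := by
    rw [← zpow_add_one₀ hAne (k - 1), sub_add_cancel]
  have hBz : B ^ k = B ^ (k - 1) * B := by
    rw [← zpow_add_one₀ hBne (k - 1), sub_add_cancel]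
  rw [hAz, hBz]
  set Ap : ℂ := A ^ (k - 1) with hAp
  set Bp : ℂ := B ^ (k - 1) with hBp
  have hkc : ((k : ℤ) : ℂ) = 1 - (n : ℂ) := by rw [hk]; push_cast; ring
  rw [hkc, hBrel]
  have hn1 : (n : ℂ) - 1 ≠ 0 := by
    intro h0
    rw [sub_eq_zero] at h0
    have : (n : ℕ) = 1 := by exact_mod_cast h0
    omega
  field_simp
  ring
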